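/- Let Q be a real f×m matrix of rank f, let k : {1,…,L₀} → {1,…,m} be an injective choice of column indices with m ≥ L₀ ≥ 2f, and let S = Q(:,k) with S Sᵀ invertible. Assume S is dominant: for every column index i of Q and every j ∈ {1,…,L₀}, replacing the j-th column of S by the i-th column qᵢ of Q yields a matrix S⁽ʲ←ⁱ⁾ with det(S⁽ʲ←ⁱ⁾ (S⁽ʲ←ⁱ⁾)ᵀ) ≤ det(S Sᵀ). Then for every column index i of Q not in the range of k, the least-norm coefficient vector cᵢ = Sᵀ(S Sᵀ)⁻¹ qᵢ satisfies ‖cᵢ‖₂ ≤ √(f/(f+1)) < 1. -/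

import Mathlib

open Matrix

/-- Rank-two update determinant identity for replacing one column of `S`. -/
lemma det_updateColumn_mul_transpose {f L₀ : ℕ} (S : Matrix (Fin f) (Fin L₀) ℝ)
    (q : Fin f → ℝ) (j : Fin L₀) (hdet : IsUnit (S * Sᵀ).det) :
    ((S.updateCol j q) * (S.updateCol j q)ᵀ).det
      = (S * Sᵀ).det *
        ((1 + q ⬝ᵥ (S * Sᵀ)⁻¹ *ᵥ (q - fun a => S a j)) *
           (1 + (q - fun a => S a j) ⬝ᵥ (S * Sᵀ)⁻¹ *ᵥ (fun a => S a j)) -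
         (q ⬝ᵥ (S * Sᵀ)⁻¹ *ᵥ (fun a => S a j)) *
           ((q - fun a => S a j) ⬝ᵥ (S * Sᵀ)⁻¹ *ᵥ (q - fun a => S a j))) := by
  classical
  set u : Fin f → ℝ := q - fun a => S a j with hu
  set U : Matrix (Fin f) (Fin 2) ℝ := fun a t => if t = 0 then u a else S a j with hU
  set W : Matrix (Fin f) (Fin 2) ℝ := fun a t => if t = 0 then q a else u a with hW
  have hB : (S.updateCol j q) * (S.updateCol j q)ᵀ = (S * Sᵀ) + U * Wᵀ := by
    ext a b
    simp only [Matrix.mul_apply, Matrix.transpose_apply, Matrix.updateCol_apply,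
      Matrix.add_apply]
    have hterm : ∀ t : Fin L₀,
        (if t = j then q a else S a t) * (if t = j then q b else S b t)
          = S a t * S b t + (if t = j then q a * q b - S a j * S b j else 0) := by
      intro t
      split_ifs with h
      · subst h; ring
      · ring
    rw [Finset.sum_congr rfl fun t _ => hterm t, Finset.sum_add_distrib,
      Finset.sum_ite_eq' Finset.univ j]
    simp only [Finset.mem_univ, if_true, Fin.sum_univ_two]
    have e1 : U a 0 * W b 0 + U a 1 * W b 1 = u a * q b + S a j * u b := by
      simp [hU, hW]
    rw [e1]
    have hua : u a = q a - S a j := rfl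
    have hub : u b = q b - S b j := rfl
    rw [hua, hub]; ring
  have h2 : (S * Sᵀ) + U * Wᵀ = (S * Sᵀ) * (1 + (S * Sᵀ)⁻¹ * U * Wᵀ) := by
    rw [Matrix.mul_add, Matrix.mul_one, ← Matrix.mul_assoc, ← Matrix.mul_assoc,
      Matrix.mul_nonsing_inv _ hdet, Matrix.one_mul]
  rw [hB, h2, det_mul, Matrix.det_one_add_mul_comm, Matrix.det_fin_two]
  have e : ∀ (x y : Fin f → ℝ),
      (Wᵀ * ((S * Sᵀ)⁻¹ * U)) = Matrix.of fun t t' =>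
        (fun a => W a t) ⬝ᵥ (S * Sᵀ)⁻¹ *ᵥ (fun a => U a t') := by
    intro x y
    ext t t'
    simp only [Matrix.mul_apply, Matrix.transpose_apply, Matrix.mulVec, dotProduct, Matrix.of_apply]
  rw [e q q]
  have hW0 : ∀ a, W a 0 = q a := fun a => rfl
  have hW1 : ∀ a, W a 1 = u a := fun a => rfl
  have hU0 : ∀ a, U a 0 = u a := fun a => rfl
  have hU1 : ∀ a, U a 1 = S a j := fun a => rfl
  simp only [Matrix.add_apply, Matrix.of_apply, Matrix.one_apply_eq, Matrix.one_apply_ne (by decide : (0 : Fin 2) ≠ 1),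
    Matrix.one_apply_ne (by decide : (1 : Fin 2) ≠ 0)]
  have c00 : (fun a => W a 0) = q := funext hW0
  have c01 : (fun a => W a 1) = u := funext hW1
  have c10 : (fun a => U a 0) = u := funext hU0
  have c11 : (fun a => U a 1) = fun a => S a j := funext hU1
  rw [c00, c01, c10, c11]
  ring

/-- If the dominant seed set is of size `L₀ ≥ 2f`, every least-norm coefficient
vector of a column outside the seed set has Euclidean norm at most
`√(f/(f+1)) < 1`. -/
theorem norm_leastNormCoef_lt_one_of_dominant
    (f m L₀ : ℕ) (hfL : 2 * f ≤ L₀) (hLm : L₀ ≤ m)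
    (Q : Matrix (Fin f) (Fin m) ℝ) (hQ : Q.rank = f)
    (k : Fin L₀ → Fin m) (hk : Function.Injective k)
    (S : Matrix (Fin f) (Fin L₀) ℝ) (hS : S = Q.submatrix id k)
    (hinv : IsUnit (S * Sᵀ))
    (hdom : ∀ (i : Fin m) (j : Fin L₀),
      ((S.updateCol j (fun a => Q a i)) * (S.updateCol j (fun a => Q a i))ᵀ).det
        ≤ (S * Sᵀ).det)
    (i : Fin m) (hi : i ∉ Set.range k)
    (c : Fin L₀ → ℝ) (hc : c = (Sᵀ * (S * Sᵀ)⁻¹).mulVec (fun a => Q a i)) :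
    Real.sqrt (∑ j, c j ^ 2) ≤ Real.sqrt ((f : ℝ) / ((f : ℝ) + 1)) ∧
      Real.sqrt ((f : ℝ) / ((f : ℝ) + 1)) < 1 := by
  classical
  set q : Fin f → ℝ := fun a => Q a i with hq
  set A : Matrix (Fin f) (Fin f) ℝ := S * Sᵀ with hA
  have hdet : IsUnit A.det := (Matrix.isUnit_iff_isUnit_det A).mp hinv
  have hAAi : A * A⁻¹ = 1 := Matrix.mul_nonsing_inv A hdet
  have hAiA : A⁻¹ * A = 1 := Matrix.nonsing_inv_mul A hdet
  have hAsym : Aᵀ = A := by rw [hA, Matrix.transpose_mul, Matrix.transpose_transpose]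
  have hAisym : A⁻¹ᵀ = A⁻¹ := by rw [Matrix.transpose_nonsing_inv, hAsym]
  -- symmetry of the bilinear form
  have hswap : ∀ x y : Fin f → ℝ, x ⬝ᵥ A⁻¹ *ᵥ y = y ⬝ᵥ A⁻¹ *ᵥ x := by
    intro x y
    rw [Matrix.dotProduct_mulVec, ← Matrix.mulVec_transpose, hAisym, dotProduct_comm]
  -- α = qᵀ A⁻¹ q
  set α : ℝ := q ⬝ᵥ A⁻¹ *ᵥ q with hα
  -- γ j = sⱼᵀ A⁻¹ sⱼ
  set γ : Fin L₀ → ℝ := fun j => (fun a => S a j) ⬝ᵥ A⁻¹ *ᵥ (fun a => S a j) with hγ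
  -- c j = sⱼᵀ A⁻¹ q
  have hcj : ∀ j, c j = (fun a => S a j) ⬝ᵥ A⁻¹ *ᵥ q := by
    intro j
    rw [hc]
    simp only [Matrix.mulVec, Matrix.mul_apply, dotProduct, Matrix.transpose_apply,
      Finset.sum_mul, Finset.mul_sum]
    rw [Finset.sum_comm]
    exact Finset.sum_congr rfl fun a _ => Finset.sum_congr rfl fun b _ => by ring
  -- ∑ c j ^ 2 = α
  have hsum : (∑ j, c j ^ 2) = α := by
    have hcv : c = Sᵀ *ᵥ (A⁻¹ *ᵥ q) := by rw [hc, ← Matrix.mulVec_mulVec]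
    have : (∑ j, c j ^ 2) = c ⬝ᵥ c := by
      simp [dotProduct, pow_two]
    rw [this, hcv]
    rw [show (Sᵀ *ᵥ (A⁻¹ *ᵥ q)) ⬝ᵥ (Sᵀ *ᵥ (A⁻¹ *ᵥ q))
        = ((A⁻¹ *ᵥ q) ᵥ* S) ⬝ᵥ (Sᵀ *ᵥ (A⁻¹ *ᵥ q)) by rw [Matrix.mulVec_transpose],
      Matrix.dotProduct_mulVec, Matrix.vecMul_vecMul, ← hA]
    have hvA : (A⁻¹ *ᵥ q) ᵥ* A = q := by
      rw [← Matrix.mulVec_transpose, hAsym, Matrix.mulVec_mulVec, hAAi, Matrix.one_mulVec]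
    rw [hvA, hα, Matrix.dotProduct_mulVec]
  -- ∑ γ j = f
  have htr : (∑ j, γ j) = (f : ℝ) := by
    have h1 : (∑ j, γ j) = Matrix.trace (Sᵀ * (A⁻¹ * S)) := by
      simp only [Matrix.trace, Matrix.diag, Matrix.mul_apply, Matrix.transpose_apply, hγ,
        dotProduct, Matrix.mulVec, Finset.mul_sum]
    rw [h1, Matrix.trace_mul_comm, Matrix.mul_assoc, ← hA, hAiA, Matrix.trace_one]
    simp
  -- positivity of det A
  have hpsd : A.PosSemidef := by
    have := Matrix.posSemidef_self_mul_conjTranspose S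
    simpa [Matrix.conjTranspose_eq_transpose_of_trivial, hA] using this
  have hdetnn : 0 ≤ A.det := by
    rw [hpsd.1.det_eq_prod_eigenvalues]
    exact Finset.prod_nonneg fun t _ => by simpa using hpsd.eigenvalues_nonneg t
  have hdetpos : 0 < A.det := lt_of_le_of_ne hdetnn (Ne.symm hdet.ne_zero)
  -- key inequality from dominance
  have key : ∀ j, c j ^ 2 ≤ γ j * (1 + α) - α := by
    intro j
    have hd := hdom i j
    rw [det_updateColumn_mul_transpose S q j hdet, ← hA] at hd
    have hq1 : q ⬝ᵥ A⁻¹ *ᵥ (q - fun a => S a j)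
        = α - (fun a => S a j) ⬝ᵥ A⁻¹ *ᵥ q := by
      rw [Matrix.mulVec_sub, dotProduct_sub, hα, hswap q (fun a => S a j)]
    have hq2 : (q - fun a => S a j) ⬝ᵥ A⁻¹ *ᵥ (fun a => S a j)
        = (fun a => S a j) ⬝ᵥ A⁻¹ *ᵥ q - γ j := by
      rw [sub_dotProduct, hγ, hswap q (fun a => S a j)]
    have hq3 : q ⬝ᵥ A⁻¹ *ᵥ (fun a => S a j) = (fun a => S a j) ⬝ᵥ A⁻¹ *ᵥ q :=
      hswap q (fun a => S a j)
    have hq4 : (q - fun a => S a j) ⬝ᵥ A⁻¹ *ᵥ (q - fun a => S a j)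
        = α - 2 * ((fun a => S a j) ⬝ᵥ A⁻¹ *ᵥ q) + γ j := by
      rw [Matrix.mulVec_sub, dotProduct_sub, sub_dotProduct, sub_dotProduct, hα,
        hswap q (fun a => S a j)]
      ring
    rw [hq1, hq2, hq3, hq4] at hd
    rw [hcj j]
    set β : ℝ := (fun a => S a j) ⬝ᵥ A⁻¹ *ᵥ q with hβ
    have hE : (1 + (α - β)) * (1 + (β - γ j)) - β * (α - 2 * β + γ j) ≤ 1 := by
      refine le_of_mul_le_mul_left ?_ hdetpos
      rw [mul_one]
      exact hd
    nlinarith [hE]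
  -- summing
  have hαnn : 0 ≤ α := by
    rw [← hsum]; exact Finset.sum_nonneg fun j _ => sq_nonneg _
  have hsumineq : α ≤ (f : ℝ) * (1 + α) - (L₀ : ℝ) * α := by
    calc α = ∑ j, c j ^ 2 := hsum.symm
    _ ≤ ∑ j, (γ j * (1 + α) - α) := Finset.sum_le_sum fun j _ => key j
    _ = (∑ j, γ j) * (1 + α) - (L₀ : ℝ) * α := by
        rw [Finset.sum_sub_distrib, ← Finset.sum_mul]
        simp [mul_comm]
    _ = (f : ℝ) * (1 + α) - (L₀ : ℝ) * α := by rw [htr]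
  have hL : (2 * f : ℝ) ≤ (L₀ : ℝ) := by exact_mod_cast hfL
  have hkey : α * ((f : ℝ) + 1) ≤ (f : ℝ) := by nlinarith
  have hfrac : α ≤ (f : ℝ) / ((f : ℝ) + 1) := by
    rw [le_div_iff₀ (by positivity)]
    exact hkey
  constructor
  · rw [hsum]
    exact Real.sqrt_le_sqrt hfrac
  · have h1 : (f : ℝ) / ((f : ℝ) + 1) < 1 := by
      rw [div_lt_one (by positivity)]
      linarith
    calc Real.sqrt ((f : ℝ) / ((f : ℝ) + 1)) < Real.sqrt 1 :=
          Real.sqrt_lt_sqrt (by positivity) h1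
    _ = 1 := Real.sqrt_one
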